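/- Let K be a commutative field and X = {x₁,…,x_d} a finite alphabet. Let A be a linear n × n matrix over the free associative algebra K⟨X⟩, i.e. A = A₀ + A₁ x₁ + … + A_d x_d with A₀,…,A_d ∈ K^{n×n}. If A is not full, then A is associated over K to a linear hollow matrix: there exist invertible matrices P, Q ∈ K^{n×n} such that P A Q is hollow. -/

import Mathlib

open Matrix

namespace NFH

variable {K : Type*} [Field K] {d : ℕ}

abbrev FM (d : ℕ) := FreeMonoid (Fin d)
abbrev R (K : Type*) [Field K] (d : ℕ) := MonoidAlgebra K (FM d)

instance : CoeFun (R K d) (fun _ => FM d → K) := ⟨fun x => x.coeff⟩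
abbrev R.support (x : R K d) : Finset (FM d) := x.coeff.support

def degle (t : ℕ) (x : R K d) : Prop := ∀ w ∈ x.support, FreeMonoid.length w ≤ t
def deglt (t : ℕ) (x : R K d) : Prop := ∀ w ∈ x.support, FreeMonoid.length w < t
def homog (t : ℕ) (x : R K d) : Prop := ∀ w ∈ x.support, FreeMonoid.length w = t
noncomputable def pi (t : ℕ) (x : R K d) : R K d :=
  MonoidAlgebra.ofCoeff (Finsupp.filter (fun w => FreeMonoid.length w = t) x.coeff)
noncomputable def deg (x : R K d) : ℕ := x.support.sup FreeMonoid.length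

lemma degle_deg (x : R K d) : degle (deg x) x := fun w hw => Finset.le_sup hw

lemma degle_mono {s t : ℕ} (h : s ≤ t) {x : R K d} (hx : degle s x) : degle t x :=
  fun w hw => le_trans (hx w hw) h

lemma degle_of_deg_le {t : ℕ} {x : R K d} (h : deg x ≤ t) : degle t x :=
  degle_mono h (degle_deg x)

lemma deg_le_of_degle {t : ℕ} {x : R K d} (h : degle t x) : deg x ≤ t :=
  Finset.sup_le h

lemma homog_zero (t : ℕ) : homog t (0 : R K d) := by simp [homog]

lemma degle_zero (t : ℕ) : degle t (0 : R K d) := by simp [degle]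

lemma homog_pi (t : ℕ) (x : R K d) : homog t (pi t x) := by
  intro w hw
  have := Finsupp.support_filter (p := fun w : FM d => FreeMonoid.length w = t) (f := x.coeff) ▸ (show w ∈ (Finsupp.filter (fun w => FreeMonoid.length w = t) x.coeff).support from hw)
  simpa using (Finset.mem_filter.mp this).2

lemma pi_apply (t : ℕ) (x : R K d) (w : FM d) :
    pi t x w = if FreeMonoid.length w = t then x w else 0 := Finsupp.filter_apply _ _ _

lemma pi_of_homog {t : ℕ} {x : R K d} (h : homog t x) : pi t x = x := by
  ext w
  rw [pi_apply]
  by_cases hw : w ∈ x.support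
  · simp [h w hw]
  · have : x w = 0 := Finsupp.notMem_support_iff.mp hw
    simp [this]

lemma pi_eq_zero_of_ne {t : ℕ} {x : R K d} (h : ∀ w ∈ x.support, FreeMonoid.length w ≠ t) :
    pi t x = 0 := by
  ext w
  rw [pi_apply]
  by_cases hw : w ∈ x.support
  · simp [h w hw]
  · have : x w = 0 := Finsupp.notMem_support_iff.mp hw
    simp [this]

lemma pi_add (t : ℕ) (x y : R K d) : pi t (x + y) = pi t x + pi t y := by
  ext w
  rw [MonoidAlgebra.coeff_add, Finsupp.add_apply, pi_apply, pi_apply, pi_apply, MonoidAlgebra.coeff_add, Finsupp.add_apply]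
  split <;> simp

lemma pi_zero (t : ℕ) : pi t (0 : R K d) = 0 := by ext w; simp [pi_apply]

lemma pi_neg (t : ℕ) (x : R K d) : pi t (-x) = - pi t x := by
  ext w
  rw [MonoidAlgebra.coeff_neg, Finsupp.neg_apply, pi_apply, pi_apply, MonoidAlgebra.coeff_neg, Finsupp.neg_apply]
  split <;> simp

lemma pi_sub (t : ℕ) (x y : R K d) : pi t (x - y) = pi t x - pi t y := by
  rw [sub_eq_add_neg, sub_eq_add_neg, pi_add, pi_neg]

lemma pi_sum {ι : Type*} (s : Finset ι) (t : ℕ) (f : ι → R K d) :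
    pi t (∑ k ∈ s, f k) = ∑ k ∈ s, pi t (f k) := by
  classical
  induction s using Finset.induction with
  | empty => simp [pi_zero]
  | insert a s h ih => simp [Finset.sum_insert h, pi_add, ih]

-- support of product
lemma mem_support_mul {x y : R K d} {w : FM d} (hw : w ∈ (x * y).support) :
    ∃ u ∈ x.support, ∃ v ∈ y.support, u * v = w := by
  classical
  have := MonoidAlgebra.support_coeff_mul_subset x y hw
  rcases Finset.mem_mul.mp this with ⟨u, hu, v, hv, huv⟩
  exact ⟨u, hu, v, hv, huv⟩

lemma degle_mul {s t : ℕ} {x y : R K d} (hx : degle s x) (hy : degle t y) :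
    degle (s + t) (x * y) := by
  intro w hw
  obtain ⟨u, hu, v, hv, rfl⟩ := mem_support_mul hw
  rw [FreeMonoid.length_mul]
  exact Nat.add_le_add (hx u hu) (hy v hv)

lemma homog_mul {s t : ℕ} {x y : R K d} (hx : homog s x) (hy : homog t y) :
    homog (s + t) (x * y) := by
  intro w hw
  obtain ⟨u, hu, v, hv, rfl⟩ := mem_support_mul hw
  rw [FreeMonoid.length_mul, hx u hu, hy v hv]

/-- strict degree bound (see `deglt` above) -/

lemma deglt_of_pi_zero {t : ℕ} {x : R K d} (hx : degle t x) (h : pi t x = 0) :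
    deglt t x := by
  intro w hw
  rcases Nat.lt_or_ge (FreeMonoid.length w) t with h' | h'
  · exact h'
  · exfalso
    have hlen : FreeMonoid.length w = t := le_antisymm (hx w hw) h'
    have : pi t x w = x w := by rw [pi_apply, if_pos hlen]
    rw [h] at this
    exact Finsupp.mem_support_iff.mp hw (by simpa using this.symm)

lemma eq_zero_of_deglt_zero {x : R K d} (h : deglt 0 x) : x = 0 := by
  ext w
  by_cases hw : w ∈ x.support
  · exact absurd (h w hw) (Nat.not_lt_zero _)
  · exact Finsupp.notMem_support_iff.mp hw

lemma degle_of_deglt {t : ℕ} {x : R K d} (h : deglt (t+1) x) : degle t x :=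
  fun w hw => Nat.lt_succ_iff.mp (h w hw)

lemma sub_pi_deglt {t : ℕ} {x : R K d} (hx : degle t x) : deglt t (x - pi t x) := by
  intro w hw
  have hne : (x - pi t x) w ≠ 0 := Finsupp.mem_support_iff.mp hw
  rw [MonoidAlgebra.coeff_sub, Finsupp.sub_apply, pi_apply] at hne
  by_cases hlen : FreeMonoid.length w = t
  · simp [hlen] at hne
  · have hmem : w ∈ x.support := by
      by_contra hc
      have : x w = 0 := Finsupp.notMem_support_iff.mp hc
      simp [this, hlen] at hne
    exact lt_of_le_of_ne (hx w hmem) hlen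

lemma pi_eq_zero_of_deglt {t : ℕ} {x : R K d} (h : deglt t x) : pi t x = 0 :=
  pi_eq_zero_of_ne (fun w hw => Nat.ne_of_lt (h w hw))

lemma deglt_mul_left {s t : ℕ} {x y : R K d} (hx : deglt s x) (hy : degle t y) :
    deglt (s + t) (x * y) := by
  intro w hw
  obtain ⟨u, hu, v, hv, rfl⟩ := mem_support_mul hw
  rw [FreeMonoid.length_mul]
  exact Nat.add_lt_add_of_lt_of_le (hx u hu) (hy v hv)

lemma deglt_mul_right {s t : ℕ} {x y : R K d} (hx : degle s x) (hy : deglt t y) :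
    deglt (s + t) (x * y) := by
  intro w hw
  obtain ⟨u, hu, v, hv, rfl⟩ := mem_support_mul hw
  rw [FreeMonoid.length_mul]
  exact Nat.add_lt_add_of_le_of_lt (hx u hu) (hy v hv)

/-- top component of a product -/
lemma pi_mul_top {s t : ℕ} {x y : R K d} (hx : degle s x) (hy : degle t y) :
    pi (s + t) (x * y) = pi s x * pi t y := by
  have hxd : x = pi s x + (x - pi s x) := by abel
  have hyd : y = pi t y + (y - pi t y) := by abel
  have h1 : deglt s (x - pi s x) := sub_pi_deglt hx
  have h2 : deglt t (y - pi t y) := sub_pi_deglt hy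
  have hxs : degle s (pi s x) := fun w hw => le_of_eq (homog_pi s x w hw)
  have hyt : degle t (pi t y) := fun w hw => le_of_eq (homog_pi t y w hw)
  have hy' : degle t (y - pi t y) := fun w hw => le_of_lt (h2 w hw)
  have e1 : pi (s+t) (pi s x * pi t y) = pi s x * pi t y :=
    pi_of_homog (homog_mul (homog_pi s x) (homog_pi t y))
  have e2 : pi (s+t) (pi s x * (y - pi t y)) = 0 :=
    pi_eq_zero_of_deglt (deglt_mul_right hxs h2)
  have e3 : pi (s+t) ((x - pi s x) * pi t y) = 0 :=
    pi_eq_zero_of_deglt (deglt_mul_left h1 hyt)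
  have e4 : pi (s+t) ((x - pi s x) * (y - pi t y)) = 0 :=
    pi_eq_zero_of_deglt (deglt_mul_left h1 hy')
  conv_lhs => rw [hxd, hyd]
  rw [add_mul, mul_add, mul_add, pi_add, pi_add, pi_add, e1, e2, e3, e4]
  simp


lemma algebraMap_eq_single (c : K) :
    algebraMap K (R K d) c = MonoidAlgebra.single 1 c := by
  rw [MonoidAlgebra.coe_algebraMap]; simp

lemma const_of_degle_zero {x : R K d} (h : degle 0 x) :
    x = algebraMap K (R K d) (x 1) := by
  rw [algebraMap_eq_single]
  have : x.support ⊆ {1} := by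
    intro w hw
    have := Nat.le_zero.mp (h w hw)
    rw [Finset.mem_singleton, ← FreeMonoid.length_eq_zero]
    exact this
  exact MonoidAlgebra.coeff_injective (Finsupp.support_subset_singleton.mp this)

-- injectivity of left multiplication by a letter
lemma of_mul_injective (i : Fin d) : Function.Injective (fun w : FM d => FreeMonoid.of i * w) := by
  intro w1 w2 h
  simpa using congrArg FreeMonoid.toList h

/-- left transduction : coefficient-extraction of the leading letter i -/
noncomputable def L (i : Fin d) (x : R K d) : R K d :=
  MonoidAlgebra.ofCoeff (Finsupp.comapDomain (fun w => FreeMonoid.of i * w) x.coeff ((of_mul_injective i).injOn))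

lemma L_apply (i : Fin d) (x : R K d) (w : FM d) : L i x w = x (FreeMonoid.of i * w) := rfl

lemma L_add (i : Fin d) (x y : R K d) : L i (x + y) = L i x + L i y := by
  ext w
  rw [L_apply, MonoidAlgebra.coeff_add, Finsupp.add_apply, MonoidAlgebra.coeff_add, Finsupp.add_apply, L_apply, L_apply]

lemma L_zero (i : Fin d) : L i (0 : R K d) = 0 := by ext w; simp [L_apply]

lemma L_sum {ι : Type*} (s : Finset ι) (i : Fin d) (f : ι → R K d) :
    L i (∑ k ∈ s, f k) = ∑ k ∈ s, L i (f k) := by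
  classical
  induction s using Finset.induction with
  | empty => simp [L_zero]
  | insert a s h ih => simp [Finset.sum_insert h, L_add, ih]

lemma exists_cons (w : FM d) (hw : w ≠ 1) : ∃ i w', w = FreeMonoid.of i * w' := by
  rcases hl : FreeMonoid.toList w with _ | ⟨i, l⟩
  · exfalso; apply hw
    have := congrArg FreeMonoid.ofList hl
    simpa using this
  · refine ⟨i, FreeMonoid.ofList l, ?_⟩
    have := congrArg FreeMonoid.ofList hl
    simpa using this

lemma eq_zero_of_L (x : R K d) (h1 : x 1 = 0) (h : ∀ i, L i x = 0) : x = 0 := by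
  ext w
  by_cases hw : w = 1
  · simp [hw, h1]
  · obtain ⟨i, w', rfl⟩ := exists_cons w hw
    have : L i x w' = 0 := by rw [h i]; rfl
    rw [L_apply] at this
    simpa using this

lemma exists_L_ne_zero {x : R K d} (hx : x ≠ 0) (h1 : x 1 = 0) : ∃ i, L i x ≠ 0 := by
  by_contra hc
  push_neg at hc
  exact hx (eq_zero_of_L x h1 hc)


lemma homog_L {t : ℕ} {x : R K d} (hx : homog (t+1) x) (i : Fin d) : homog t (L i x) := by
  intro w hw
  have : x (FreeMonoid.of i * w) ≠ 0 := by
    have := Finsupp.mem_support_iff.mp hw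
    rwa [L_apply] at this
  have hm := hx _ (Finsupp.mem_support_iff.mpr this)
  rw [FreeMonoid.length_mul, FreeMonoid.length_of] at hm
  omega

lemma apply_one_eq_zero_of_homog {t : ℕ} {x : R K d} (hx : homog (t+1) x) : x 1 = 0 := by
  by_contra hc
  have := hx 1 (Finsupp.mem_support_iff.mpr hc)
  simp at this

lemma L_single (i j : Fin d) (w : FM d) (a : K) :
    L i (MonoidAlgebra.single (FreeMonoid.of j * w) a)
      = if j = i then MonoidAlgebra.single w a else 0 := by
  classical
  by_cases hji : j = i
  · subst hji
    rw [if_pos rfl]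
    ext w'
    rw [L_apply, MonoidAlgebra.coeff_single, MonoidAlgebra.coeff_single, Finsupp.single_apply, Finsupp.single_apply]
    by_cases hww : w = w'
    · simp [hww]
    · rw [if_neg hww, if_neg (fun hc => hww ((of_mul_injective j) hc))]
  · rw [if_neg hji]
    ext w'
    rw [L_apply, MonoidAlgebra.coeff_single, Finsupp.single_apply, if_neg, MonoidAlgebra.coeff_zero, Finsupp.coe_zero, Pi.zero_apply]
    intro hc
    apply hji
    have h2 : j :: FreeMonoid.toList w = i :: FreeMonoid.toList w' := by
      simpa using congrArg FreeMonoid.toList hc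
    exact (List.cons.injEq _ _ _ _ ▸ h2).1

lemma L_single_mul (i : Fin d) (u : FM d) (hu : u ≠ 1) (c : K) (y : R K d) :
    L i (MonoidAlgebra.single u c * y) = L i (MonoidAlgebra.single u c) * y := by
  obtain ⟨j, u', rfl⟩ := exists_cons u hu
  induction y using MonoidAlgebra.induction with
  | zero => simp [L_zero]
  | single_add v c' y _ _ ih =>
    rw [mul_add, L_add, ih, mul_add]
    congr 1
    have : (MonoidAlgebra.single (FreeMonoid.of j * u') c * MonoidAlgebra.single v c' : R K d)
        = MonoidAlgebra.single (FreeMonoid.of j * (u' * v)) (c * c') := by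
      rw [MonoidAlgebra.single_mul_single, mul_assoc]
    rw [this, L_single, L_single]
    by_cases hji : j = i
    · rw [if_pos hji, if_pos hji, MonoidAlgebra.single_mul_single]
    · rw [if_neg hji, if_neg hji, zero_mul]

lemma L_mul (i : Fin d) {x : R K d} (hx : x 1 = 0) (y : R K d) :
    L i (x * y) = L i x * y := by
  classical
  have hrepr : x = ∑ u ∈ x.support, MonoidAlgebra.single u (x u) := by
    conv_lhs => rw [← MonoidAlgebra.sum_coeff_single x]
    rw [Finsupp.sum]
  conv_lhs => rw [hrepr]
  conv_rhs => rw [hrepr]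
  rw [Finset.sum_mul, L_sum, L_sum, Finset.sum_mul]
  apply Finset.sum_congr rfl
  intro u hu
  have hu1 : u ≠ 1 := by
    intro hc; subst hc
    exact (Finsupp.mem_support_iff.mp hu) hx
  exact L_single_mul i u hu1 (x u) y


lemma homog_algebraMap (c : K) : homog 0 (algebraMap K (R K d) c) := by
  intro w hw
  rw [algebraMap_eq_single] at hw
  have := Finsupp.support_single_subset hw
  simp only [Finset.mem_singleton] at this
  simp [this]

lemma homog_degle {t : ℕ} {x : R K d} (h : homog t x) : degle t x :=
  fun w hw => le_of_eq (h w hw)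

/-- dependence among homogeneous vectors : the constant-coefficient case -/
lemma const_dep {n m : ℕ} (t : Fin m → ℕ) (u : Fin m → Fin n → R K d)
    (a : Fin m → R K d) (k : Fin m) (hak : a k ≠ 0) (hk0 : homog 0 (a k))
    (haj : ∀ j, homog (t k - t j) (a j)) (htj : ∀ j, a j ≠ 0 → t j ≤ t k)
    (hrel : ∀ q, ∑ j, a j * u j q = 0) :
    ∃ c : Fin m → R K d,
      (∀ j, homog (t k - t j) (c j)) ∧ (∀ j, c j ≠ 0 → t j ≤ t k) ∧ c k = 0 ∧
      (∀ q, u k q = ∑ j, c j * u j q) := by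
  classical
  set lam : K := a k 1 with hlam
  have hconst : a k = algebraMap K (R K d) lam := const_of_degle_zero (homog_degle hk0)
  have hlamne : lam ≠ 0 := by
    intro hc
    apply hak
    rw [hconst, hc, map_zero]
  set c : Fin m → R K d := fun j => if j = k then 0 else algebraMap K (R K d) (-lam⁻¹) * a j with hc
  refine ⟨c, ?_, ?_, by simp [hc], ?_⟩
  · intro j
    by_cases hjk : j = k
    · simp only [hc, hjk, if_pos rfl]; exact homog_zero _
    · simp only [hc, if_neg hjk]
      have := homog_mul (homog_algebraMap (K := K) (d := d) (-lam⁻¹)) (haj j)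
      simpa using this
  · intro j hcj
    have hjk : j ≠ k := by intro hjj; rw [hjj] at hcj; simp [hc] at hcj
    apply htj
    intro haj0
    apply hcj
    simp [hc, hjk, haj0]
  · intro q
    have hsplit : ∑ j ∈ Finset.univ.erase k, a j * u j q + a k * u k q = ∑ j, a j * u j q :=
      Finset.sum_erase_add _ _ (Finset.mem_univ k)
    have herase : ∑ j ∈ Finset.univ.erase k, a j * u j q = -(a k * u k q) := by
      have h0 := hrel q
      rw [← hsplit] at h0
      exact eq_neg_of_add_eq_zero_left h0
    have step : ∑ j, c j * u j q = u k q := by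
      have e0 : ∑ j, c j * u j q = ∑ j ∈ Finset.univ.erase k, c j * u j q := by
        rw [Finset.sum_erase]
        simp [hc]
      have e1 : ∑ j ∈ Finset.univ.erase k, c j * u j q
          = ∑ j ∈ Finset.univ.erase k, algebraMap K (R K d) (-lam⁻¹) * (a j * u j q) := by
        apply Finset.sum_congr rfl
        intro j hj
        have hjk : j ≠ k := Finset.ne_of_mem_erase hj
        simp only [hc, if_neg hjk, mul_assoc]
      have e2 : ∑ j ∈ Finset.univ.erase k, algebraMap K (R K d) (-lam⁻¹) * (a j * u j q)
          = algebraMap K (R K d) (-lam⁻¹) * ∑ j ∈ Finset.univ.erase k, a j * u j q := by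
        rw [Finset.mul_sum]
      rw [e0, e1, e2, herase]
      rw [map_neg, neg_mul_neg, hconst, ← mul_assoc, ← _root_.map_mul,
        inv_mul_cancel₀ hlamne, _root_.map_one, one_mul]
    exact step.symm

lemma keylemma {n m : ℕ} (D : ℕ) (t : Fin m → ℕ) (u : Fin m → Fin n → R K d)
    (a : Fin m → R K d) (ha : ∀ k, homog (D - t k) (a k))
    (hta : ∀ k, a k ≠ 0 → t k ≤ D)
    (hrel : ∀ q, ∑ k, a k * u k q = 0)
    (hne : ∃ k, a k ≠ 0) :
    ∃ k, a k ≠ 0 ∧ ∃ c : Fin m → R K d,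
      (∀ j, homog (t k - t j) (c j)) ∧ (∀ j, c j ≠ 0 → t j ≤ t k) ∧ c k = 0 ∧
      (∀ q, u k q = ∑ j, c j * u j q) := by
  induction D generalizing a with
  | zero =>
    obtain ⟨k, hak⟩ := hne
    have htk : t k = 0 := Nat.le_zero.mp (hta k hak)
    have hk0 : homog 0 (a k) := by
      have h := ha k
      rwa [Nat.zero_sub] at h
    have haj : ∀ j, homog (t k - t j) (a j) := by
      intro j
      have h := ha j
      have e : (0 : ℕ) - t j = t k - t j := by omega
      rwa [e] at h
    have htj : ∀ j, a j ≠ 0 → t j ≤ t k := by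
      intro j hj
      have := hta j hj
      omega
    exact ⟨k, hak, const_dep t u a k hak hk0 haj htj hrel⟩
  | succ D ih =>
    by_cases hS : ∃ k, a k ≠ 0 ∧ t k = D + 1
    · obtain ⟨k, hak, htk⟩ := hS
      have hk0 : homog 0 (a k) := by
        have h := ha k
        have e : D + 1 - t k = 0 := by omega
        rwa [e] at h
      have haj : ∀ j, homog (t k - t j) (a j) := by
        intro j
        have h := ha j
        have e : D + 1 - t j = t k - t j := by omega
        rwa [e] at h
      have htj : ∀ j, a j ≠ 0 → t j ≤ t k := by
        intro j hj
        have := hta j hj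
        omega
      exact ⟨k, hak, const_dep t u a k hak hk0 haj htj hrel⟩
    · push_neg at hS
      obtain ⟨k₀, hk₀⟩ := hne
      have h1 : ∀ k, a k ≠ 0 → (a k) 1 = 0 := by
        intro k hk
        have htlt : t k < D + 1 := lt_of_le_of_ne (hta k hk) (hS k hk)
        have e : D + 1 - t k = (D - t k) + 1 := by omega
        exact apply_one_eq_zero_of_homog (e ▸ ha k)
      obtain ⟨i, hLi⟩ := exists_L_ne_zero hk₀ (h1 k₀ hk₀)
      have ha' : ∀ k, homog (D - t k) (L i (a k)) := by
        intro k
        by_cases hk : a k = 0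
        · rw [hk, L_zero]; exact homog_zero _
        · have htlt : t k < D + 1 := lt_of_le_of_ne (hta k hk) (hS k hk)
          have e : D + 1 - t k = (D - t k) + 1 := by omega
          exact homog_L (e ▸ ha k) i
      have hta' : ∀ k, L i (a k) ≠ 0 → t k ≤ D := by
        intro k hk
        have hk' : a k ≠ 0 := by intro hc; apply hk; rw [hc, L_zero]
        have := hta k hk'
        have := hS k hk'
        omega
      have hrel' : ∀ q, ∑ k, L i (a k) * u k q = 0 := by
        intro q
        have e : ∀ k : Fin m, L i (a k) * u k q = L i (a k * u k q) := by
          intro k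
          by_cases hk : a k = 0
          · rw [hk]; simp [L_zero]
          · exact (L_mul i (h1 k hk) _).symm
        rw [Finset.sum_congr rfl (fun k _ => e k), ← L_sum, hrel q, L_zero]
      obtain ⟨k, hk, rest⟩ := ih (fun k => L i (a k)) ha' hta' hrel' ⟨k₀, hLi⟩
      refine ⟨k, ?_, rest⟩
      intro hc
      apply hk
      rw [hc, L_zero]


-- new small lemmas
lemma deg_zero : deg (0 : R K d) = 0 := by simp [deg]

lemma degle_zero' (t : ℕ) : degle t (0 : R K d) := by simp [degle]

lemma degle_sub {t : ℕ} {x y : R K d} (hx : degle t x) (hy : degle t y) : degle t (x - y) := by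
  classical
  intro w hw
  have := Finsupp.support_sub hw
  rcases Finset.mem_union.mp this with h | h
  · exact hx w h
  · exact hy w h

lemma degle_sum {ι : Type*} {s : Finset ι} {t : ℕ} {f : ι → R K d}
    (h : ∀ l ∈ s, degle t (f l)) : degle t (∑ l ∈ s, f l) := by
  classical
  have hde : DecidableEq (FM d) := Classical.decEq _
  induction s using Finset.induction with
  | empty => simpa using degle_zero' t
  | insert a s hns ih =>
    rw [Finset.sum_insert hns]
    intro w hw
    have := Finsupp.support_add hw
    rcases Finset.mem_union.mp this with hh | hh
    · exact h a (Finset.mem_insert_self a s) w hh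
    · exact ih (fun l hl => h l (Finset.mem_insert_of_mem hl)) w hh

lemma pi_deg_ne_zero {x : R K d} (hx : x ≠ 0) : pi (deg x) x ≠ 0 := by
  have hne : x.support.Nonempty := Finsupp.support_nonempty_iff.mpr (fun h => hx (MonoidAlgebra.coeff_eq_zero.mp h))
  obtain ⟨w, hw, hsup⟩ := Finset.exists_mem_eq_sup x.support hne FreeMonoid.length
  intro hc
  have hdx : FreeMonoid.length w = deg x := hsup.symm
  have : pi (deg x) x w = x w := by
    rw [pi, Finsupp.filter_apply, if_pos hdx]
  rw [hc] at this
  exact Finsupp.mem_support_iff.mp hw (by simpa using this.symm)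

/-- column degree of a family -/
noncomputable def fdeg {n m : ℕ} (w : Fin m → Fin n → R K d) (k : Fin m) : ℕ :=
  Finset.univ.sup fun q => deg (w k q)

lemma degle_fdeg {n m : ℕ} (w : Fin m → Fin n → R K d) (k : Fin m) (q : Fin n) :
    degle (fdeg w k) (w k q) :=
  degle_of_deg_le (Finset.le_sup (f := fun q => deg (w k q)) (Finset.mem_univ q))

/-- number of nonzero rows -/
noncomputable def nz {n m : ℕ} (w : Fin m → Fin n → R K d) : ℕ :=
  {k | ∃ q, w k q ≠ 0}.ncard

lemma nz_le {n m : ℕ} (w : Fin m → Fin n → R K d) : nz w ≤ m := by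
  have h1 : {k | ∃ q, w k q ≠ 0}.ncard ≤ (Set.univ : Set (Fin m)).ncard :=
    Set.ncard_le_ncard (Set.subset_univ _) Set.finite_univ
  have h2 : (Set.univ : Set (Fin m)).ncard = m := by
    rw [Set.ncard_univ, Nat.card_eq_fintype_card, Fintype.card_fin]
  rw [nz]; omega

lemma nz_lt {n m : ℕ} {w w' : Fin m → Fin n → R K d} (k : Fin m)
    (hk0 : ∀ q, w' k q = 0) (hoth : ∀ j, j ≠ k → w' j = w j) (hk : ∃ q, w k q ≠ 0) :
    nz w' < nz w := by
  apply Set.ncard_lt_ncard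
  · constructor
    · intro j hj
      obtain ⟨q, hq⟩ := hj
      have hjk : j ≠ k := by
        intro hc; subst hc; exact hq (hk0 q)
      exact ⟨q, by rwa [← hoth j hjk]⟩
    · intro hsub
      have : k ∈ {j | ∃ q, w' j q ≠ 0} := hsub hk
      obtain ⟨q, hq⟩ := this
      exact hq (hk0 q)
  · exact Set.toFinite _

lemma nz_eq {n m : ℕ} {w w' : Fin m → Fin n → R K d}
    (h : ∀ j, (∃ q, w' j q ≠ 0) ↔ (∃ q, w j q ≠ 0)) : nz w' = nz w := by
  unfold nz
  congr 1
  ext j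
  exact h j

/-- lexicographic helper -/
lemma lex_mul_lt {B S S' x x' : ℕ} (hx' : x' < B) (h : S' < S ∨ (S' ≤ S ∧ x' < x)) :
    B * S' + x' < B * S + x := by
  rcases h with h | ⟨h1, h2⟩
  · calc B * S' + x' < B * S' + B := by omega
      _ = B * (S' + 1) := by ring
      _ ≤ B * S := Nat.mul_le_mul_left B h
      _ ≤ B * S + x := Nat.le_add_right _ _
  · have : B * S' ≤ B * S := Nat.mul_le_mul_left B h1
    omega

noncomputable def meas {n m : ℕ} (v w : Fin m → Fin n → R K d) : ℕ :=
  (m+1)*(m+1) * (∑ k, fdeg w k) + ((m+1) * nz w + nz v)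

lemma inner_lt_B {n m : ℕ} (v w : Fin m → Fin n → R K d) :
    (m+1) * nz w + nz v < (m+1)*(m+1) := by
  have h1 := nz_le w
  have h2 := nz_le v
  nlinarith

lemma meas_lt {n m : ℕ} {v w v' w' : Fin m → Fin n → R K d}
    (h : (∑ k, fdeg w' k) < (∑ k, fdeg w k) ∨
      ((∑ k, fdeg w' k) ≤ (∑ k, fdeg w k) ∧
        (nz w' < nz w ∨ (nz w' ≤ nz w ∧ nz v' < nz v)))) :
    meas v' w' < meas v w := by
  unfold meas
  apply lex_mul_lt (inner_lt_B v' w')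
  rcases h with h | ⟨h1, h2⟩
  · exact Or.inl h
  · rcases Nat.lt_or_ge (∑ k, fdeg w' k) (∑ k, fdeg w k) with hlt | hge
    · exact Or.inl hlt
    · have heq : (∑ k, fdeg w' k) = (∑ k, fdeg w k) := le_antisymm h1 hge
      refine Or.inr ⟨le_of_eq heq, ?_⟩
      apply lex_mul_lt (by have := nz_le v'; omega)
      rcases h2 with h2 | ⟨h2a, h2b⟩
      · exact Or.inl h2
      · rcases Nat.lt_or_ge (nz w') (nz w) with hl | hg
        · exact Or.inl hl
        · exact Or.inr ⟨h2a, h2b⟩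


lemma fdeg_zero_of_zero {n m : ℕ} {w : Fin m → Fin n → R K d} {k : Fin m}
    (h : ∀ q, w k q = 0) : fdeg w k = 0 := by
  apply Nat.le_zero.mp
  apply Finset.sup_le
  intro q _
  rw [h q, deg_zero]

lemma fdeg_congr {n m : ℕ} {w w' : Fin m → Fin n → R K d} {j : Fin m}
    (h : w' j = w j) : fdeg w' j = fdeg w j := by
  unfold fdeg; rw [h]

lemma reduce {n m : ℕ} : ∀ (N : ℕ) (v w : Fin m → Fin n → R K d),
    meas v w ≤ N →
    (∀ p q, degle 1 (∑ k, v k p * w k q)) →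
    ∃ v' w' : Fin m → Fin n → R K d,
      (∀ p q, (∑ k, v' k p * w' k q) = ∑ k, v k p * w k q) ∧
      (∀ k, (∀ q, degle 0 (w' k q)) ∨ (∀ p, degle 0 (v' k p))) := by
  intro N
  induction N using Nat.strong_induction_on with
  | _ N ih =>
  intro v w hmeas hdeg
  classical
  have recur : ∀ (v' w' : Fin m → Fin n → R K d), meas v' w' < meas v w →
      (∀ p q, (∑ k, v' k p * w' k q) = ∑ k, v k p * w k q) →
      ∃ v'' w'' : Fin m → Fin n → R K d,
        (∀ p q, (∑ k, v'' k p * w'' k q) = ∑ k, v k p * w k q) ∧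
        (∀ k, (∀ q, degle 0 (w'' k q)) ∨ (∀ p, degle 0 (v'' k p))) := by
    intro v' w' hlt hsum
    obtain ⟨v'', w'', hs, ht⟩ := ih (meas v' w') (by omega) v' w' le_rfl
        (fun p q => (hsum p q) ▸ hdeg p q)
    exact ⟨v'', w'', fun p q => (hs p q).trans (hsum p q), ht⟩
  by_cases hA : ∃ k, (∀ p, v k p = 0) ∧ (∃ q, w k q ≠ 0)
  · obtain ⟨k, hkv, hkw⟩ := hA
    set w' : Fin m → Fin n → R K d := fun j => if j = k then (fun _ => 0) else w j with hw'
    apply recur v w'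
    · apply meas_lt
      right
      constructor
      · apply Finset.sum_le_sum
        intro j _
        by_cases hj : j = k
        · subst hj
          rw [fdeg_zero_of_zero (by intro q; simp [hw'])]
          exact Nat.zero_le _
        · rw [fdeg_congr (w := w) (w' := w') (j := j) (by simp [hw', hj])]
      · left
        exact nz_lt k (by intro q; simp [hw']) (fun j hj => by simp [hw', hj]) hkw
    · intro p q
      apply Finset.sum_congr rfl
      intro j _
      by_cases hj : j = k
      · subst hj
        rw [hkv p, zero_mul, zero_mul]
      · simp [hw', hj]
  by_cases hB : ∃ k, (∀ q, w k q = 0) ∧ (∃ p, v k p ≠ 0)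
  · obtain ⟨k, hkw, hkv⟩ := hB
    set v' : Fin m → Fin n → R K d := fun j => if j = k then (fun _ => 0) else v j with hv'
    apply recur v' w
    · apply meas_lt
      right
      refine ⟨le_rfl, Or.inr ⟨le_rfl, ?_⟩⟩
      exact nz_lt k (by intro p; simp [hv']) (fun j hj => by simp [hv', hj]) hkv
    · intro p q
      apply Finset.sum_congr rfl
      intro j _
      by_cases hj : j = k
      · subst hj
        rw [hkw q, mul_zero]
        simp [hv']
      · simp [hv', hj]
  have hvw : ∀ k, (∀ p, v k p = 0) → (∀ q, w k q = 0) := by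
    intro k hk
    by_contra hc
    push_neg at hc
    exact hA ⟨k, hk, hc⟩
  have hwv : ∀ k, (∀ q, w k q = 0) → (∀ p, v k p = 0) := by
    intro k hk
    by_contra hc
    push_neg at hc
    exact hB ⟨k, hk, hc⟩
  by_cases hterm : ∀ k, (∀ q, degle 0 (w k q)) ∨ (∀ p, degle 0 (v k p))
  · exact ⟨v, w, fun p q => rfl, hterm⟩
  push_neg at hterm
  obtain ⟨k₀, hk₀w, hk₀v⟩ := hterm
  obtain ⟨q₀, hq₀⟩ := hk₀w
  obtain ⟨p₀, hp₀⟩ := hk₀v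
  have hw1 : 1 ≤ fdeg w k₀ := by
    rcases Nat.eq_zero_or_pos (fdeg w k₀) with h | h
    · exfalso
      apply hq₀
      apply degle_of_deg_le
      have : deg (w k₀ q₀) ≤ fdeg w k₀ := Finset.le_sup (f := fun q => deg (w k₀ q)) (Finset.mem_univ q₀)
      omega
    · exact h
  have hv1 : 1 ≤ fdeg v k₀ := by
    rcases Nat.eq_zero_or_pos (fdeg v k₀) with h | h
    · exfalso
      apply hp₀
      apply degle_of_deg_le
      have : deg (v k₀ p₀) ≤ fdeg v k₀ := Finset.le_sup (f := fun p => deg (v k₀ p)) (Finset.mem_univ p₀)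
      omega
    · exact h
  set D := Finset.univ.sup (fun k => fdeg v k + fdeg w k) with hD
  have hD2 : 2 ≤ D := by
    have h : fdeg v k₀ + fdeg w k₀ ≤ D :=
      Finset.le_sup (f := fun k => fdeg v k + fdeg w k) (Finset.mem_univ k₀)
    omega
  have htop : ∀ p q, ∑ k, (if fdeg v k + fdeg w k = D
      then pi (fdeg v k) (v k p) * pi (fdeg w k) (w k q) else 0) = 0 := by
    intro p q
    have h1 : ∀ k : Fin m, (if fdeg v k + fdeg w k = D
        then pi (fdeg v k) (v k p) * pi (fdeg w k) (w k q) else 0) = pi D (v k p * w k q) := by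
      intro k
      by_cases hk : fdeg v k + fdeg w k = D
      · rw [if_pos hk, ← hk, pi_mul_top (degle_fdeg v k p) (degle_fdeg w k q)]
      · rw [if_neg hk]
        symm
        apply pi_eq_zero_of_deglt
        intro x hx
        have h2 := degle_mul (degle_fdeg v k p) (degle_fdeg w k q) x hx
        have h3 : fdeg v k + fdeg w k ≤ D :=
          Finset.le_sup (f := fun k => fdeg v k + fdeg w k) (Finset.mem_univ k)
        omega
    rw [Finset.sum_congr rfl (fun k _ => h1 k), ← pi_sum]
    apply pi_eq_zero_of_deglt
    intro x hx
    have := hdeg p q x hx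
    omega
  obtain ⟨k₁, -, hk₁⟩ := Finset.exists_mem_eq_sup (Finset.univ : Finset (Fin m))
    ⟨k₀, Finset.mem_univ k₀⟩ (fun k => fdeg v k + fdeg w k)
  rw [← hD] at hk₁
  have hvk₁ : ∃ p, v k₁ p ≠ 0 := by
    by_contra hc
    push_neg at hc
    have h1 : fdeg v k₁ = 0 := fdeg_zero_of_zero hc
    have h2 : fdeg w k₁ = 0 := fdeg_zero_of_zero (hvw k₁ hc)
    omega
  have hp₁ : ∃ p, pi (fdeg v k₁) (v k₁ p) ≠ 0 := by
    rcases Nat.eq_zero_or_pos (fdeg v k₁) with h | h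
    · obtain ⟨p, hp⟩ := hvk₁
      refine ⟨p, ?_⟩
      have hd : deg (v k₁ p) = fdeg v k₁ := by
        have : deg (v k₁ p) ≤ fdeg v k₁ := Finset.le_sup (f := fun p => deg (v k₁ p)) (Finset.mem_univ p)
        omega
      rw [← hd]
      exact pi_deg_ne_zero hp
    · obtain ⟨p, -, hps⟩ := Finset.exists_mem_eq_sup (Finset.univ : Finset (Fin n))
        ⟨p₀, Finset.mem_univ p₀⟩ (fun p => deg (v k₁ p))
      have hps' : fdeg v k₁ = deg (v k₁ p) := hps
      refine ⟨p, ?_⟩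
      rw [hps']
      apply pi_deg_ne_zero
      intro hc
      rw [hc, deg_zero] at hps'
      omega
  obtain ⟨p₁, hpi₁⟩ := hp₁
  obtain ⟨k, hak, c, hchom, hct, hck, hdep⟩ := keylemma D (fun k => fdeg w k)
    (fun k q => pi (fdeg w k) (w k q))
    (fun k => if fdeg v k + fdeg w k = D then pi (fdeg v k) (v k p₁) else 0)
    (by
      intro k
      show homog (D - fdeg w k) (if fdeg v k + fdeg w k = D then pi (fdeg v k) (v k p₁) else 0)
      by_cases hk : fdeg v k + fdeg w k = D
      · rw [if_pos hk]
        have he : fdeg v k = D - fdeg w k := by omega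
        rw [← he]
        exact homog_pi _ _
      · rw [if_neg hk]
        exact homog_zero _)
    (by
      intro k hk
      have hk' : (if fdeg v k + fdeg w k = D then pi (fdeg v k) (v k p₁) else 0) ≠ 0 := hk
      by_cases hc : fdeg v k + fdeg w k = D
      · show fdeg w k ≤ D
        omega
      · rw [if_neg hc] at hk'
        exact absurd rfl hk')
    (by
      intro q
      have : ∀ k : Fin m, (if fdeg v k + fdeg w k = D then pi (fdeg v k) (v k p₁) else 0)
          * pi (fdeg w k) (w k q)
          = (if fdeg v k + fdeg w k = D
            then pi (fdeg v k) (v k p₁) * pi (fdeg w k) (w k q) else 0) := by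
        intro k
        by_cases hk : fdeg v k + fdeg w k = D
        · rw [if_pos hk, if_pos hk]
        · rw [if_neg hk, if_neg hk, zero_mul]
      rw [Finset.sum_congr rfl (fun k _ => this k)]
      exact htop p₁ q)
    ⟨k₁, by
      show (if fdeg v k₁ + fdeg w k₁ = D then pi (fdeg v k₁) (v k₁ p₁) else 0) ≠ 0
      rw [if_pos hk₁.symm]; exact hpi₁⟩
  have hdep' : ∀ q, pi (fdeg w k) (w k q) = ∑ j, c j * pi (fdeg w j) (w j q) := hdep
  have hchom' : ∀ j, homog (fdeg w k - fdeg w j) (c j) := hchom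
  have hct' : ∀ j, c j ≠ 0 → fdeg w j ≤ fdeg w k := hct
  have hcrit : fdeg v k + fdeg w k = D := by
    by_contra hc
    apply hak
    show (if fdeg v k + fdeg w k = D then pi (fdeg v k) (v k p₁) else 0) = 0
    rw [if_neg hc]
  by_cases hwk0 : fdeg w k = 0
  · -- constant dependence: kill the k-th row entirely
    have hwconst : ∀ j, fdeg w j = 0 → ∀ q, pi (fdeg w j) (w j q) = w j q := by
      intro j hj q
      apply pi_of_homog
      intro x hx
      have := degle_fdeg w j q x hx
      omega
    have hwkq : ∀ q, w k q = ∑ j, c j * w j q := by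
      intro q
      have h1 := hdep' q
      rw [hwconst k hwk0 q] at h1
      rw [h1]
      apply Finset.sum_congr rfl
      intro j _
      by_cases hcj : c j = 0
      · rw [hcj, zero_mul, zero_mul]
      · have hj0 : fdeg w j = 0 := by
          have := hct' j hcj
          omega
        rw [hwconst j hj0 q]
    set w' : Fin m → Fin n → R K d := fun j => if j = k then (fun _ => 0) else w j with hw'
    set v' : Fin m → Fin n → R K d :=
      fun j => if j = k then (fun _ => 0) else (fun p => v j p + v k p * c j) with hv'
    apply recur v' w'
    · apply meas_lt
      right
      constructor
      · apply Finset.sum_le_sum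
        intro j _
        by_cases hj : j = k
        · subst hj
          rw [fdeg_zero_of_zero (by intro q; simp [hw'])]
          exact Nat.zero_le _
        · rw [fdeg_congr (w := w) (w' := w') (j := j) (by simp [hw', hj])]
      · left
        apply nz_lt k (by intro q; simp [hw']) (fun j hj => by simp [hw', hj])
        by_contra hc
        push_neg at hc
        have h1 : fdeg w k = 0 := fdeg_zero_of_zero hc
        have h2 : fdeg v k = 0 := fdeg_zero_of_zero (hwv k hc)
        omega
    · intro p q
      rw [← Finset.sum_erase_add _ _ (Finset.mem_univ k),
        ← Finset.sum_erase_add (f := fun j => v j p * w j q) _ (Finset.mem_univ k)]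
      have hterm_k : v' k p * w' k q = 0 := by simp [hv', hw']
      rw [hterm_k]
      have hL : ∀ j ∈ Finset.univ.erase k,
          v' j p * w' j q = v j p * w j q + v k p * (c j * w j q) := by
        intro j hj
        have hjk : j ≠ k := Finset.ne_of_mem_erase hj
        simp only [hv', hw', if_neg hjk]
        rw [add_mul, mul_assoc]
      rw [Finset.sum_congr rfl hL, Finset.sum_add_distrib, ← Finset.mul_sum]
      have hsum_c : ∑ j ∈ Finset.univ.erase k, c j * w j q = w k q := by
        rw [hwkq q, ← Finset.sum_erase_add (f := fun j => c j * w j q) _ (Finset.mem_univ k)]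
        rw [hck, zero_mul, add_zero]
      rw [hsum_c]
      abel
  · -- degree-reduction move on row k
    have hwk1 : 1 ≤ fdeg w k := Nat.pos_of_ne_zero hwk0
    set x : Fin n → R K d := fun q => w k q - ∑ l, c l * w l q with hx
    set w' : Fin m → Fin n → R K d := fun j => if j = k then x else w j with hw'
    set v' : Fin m → Fin n → R K d := fun j p => v j p + v k p * c j with hv'
    have hxdeg : ∀ q, degle (fdeg w k) (x q) := by
      intro q
      apply degle_sub (degle_fdeg w k q)
      apply degle_sum
      intro l _
      by_cases hcl : c l = 0
      · rw [hcl, zero_mul]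
        exact degle_zero' _
      · have hle : fdeg w l ≤ fdeg w k := hct' l hcl
        have he : (fdeg w k - fdeg w l) + fdeg w l = fdeg w k := by omega
        rw [← he]
        exact degle_mul (homog_degle (hchom' l)) (degle_fdeg w l q)
    have hxpi : ∀ q, pi (fdeg w k) (x q) = 0 := by
      intro q
      rw [hx]
      simp only
      rw [pi_sub, pi_sum]
      have h1 : ∀ l : Fin m, pi (fdeg w k) (c l * w l q)
          = c l * pi (fdeg w l) (w l q) := by
        intro l
        by_cases hcl : c l = 0
        · rw [hcl, zero_mul, pi_zero, zero_mul]
        · have hle : fdeg w l ≤ fdeg w k := hct' l hcl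
          have he : (fdeg w k - fdeg w l) + fdeg w l = fdeg w k := by omega
          rw [← he, pi_mul_top (homog_degle (hchom' l)) (degle_fdeg w l q),
            pi_of_homog (hchom' l)]
      rw [Finset.sum_congr rfl (fun l _ => h1 l), ← hdep' q, sub_self]
    have hxlt : ∀ q, deg (x q) ≤ fdeg w k - 1 := by
      intro q
      apply deg_le_of_degle
      have hdlt := deglt_of_pi_zero (hxdeg q) (hxpi q)
      have he : fdeg w k = (fdeg w k - 1) + 1 := by omega
      apply degle_of_deglt
      rw [← he]
      exact hdlt
    apply recur v' w'
    · apply meas_lt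
      left
      apply Finset.sum_lt_sum
      · intro j _
        by_cases hj : j = k
        · subst hj
          have : fdeg w' j = Finset.univ.sup fun q => deg (x q) := by
            unfold fdeg
            simp [hw']
          rw [this]
          apply le_trans (Finset.sup_le (fun q _ => hxlt q))
          omega
        · rw [fdeg_congr (w := w) (w' := w') (j := j) (by simp [hw', hj])]
      · refine ⟨k, Finset.mem_univ k, ?_⟩
        have : fdeg w' k = Finset.univ.sup fun q => deg (x q) := by
          unfold fdeg
          simp [hw']
        rw [this]
        have := Finset.sup_le (fun q (_ : q ∈ Finset.univ) => hxlt q)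
        omega
    · intro p q
      rw [← Finset.sum_erase_add _ _ (Finset.mem_univ k),
        ← Finset.sum_erase_add (f := fun j => v j p * w j q) _ (Finset.mem_univ k)]
      have hterm_k : v' k p * w' k q = v k p * w k q - v k p * ∑ l ∈ Finset.univ.erase k, c l * w l q := by
        have h1 : v' k p = v k p := by simp [hv', hck]
        have h2 : w' k q = w k q - ∑ l, c l * w l q := by simp [hw', hx]
        rw [h1, h2, mul_sub]
        congr 1
        congr 1
        rw [← Finset.sum_erase_add (f := fun l => c l * w l q) _ (Finset.mem_univ k), hck,
          zero_mul, add_zero]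
      have hL : ∀ j ∈ Finset.univ.erase k,
          v' j p * w' j q = v j p * w j q + v k p * (c j * w j q) := by
        intro j hj
        have hjk : j ≠ k := Finset.ne_of_mem_erase hj
        simp only [hv', hw', if_neg hjk]
        rw [add_mul, mul_assoc]
      rw [hterm_k, Finset.sum_congr rfl hL, Finset.sum_add_distrib, ← Finset.mul_sum]
      abel


lemma exists_unit_matrix_cols_in {n : ℕ} (S : Submodule K (Fin n → K)) :
    ∃ (Q : Matrix (Fin n) (Fin n) K) (J : Finset (Fin n)),
      IsUnit Q ∧ J.card = Module.finrank K S ∧ ∀ j ∈ J, (fun i => Q i j) ∈ S := by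
  classical
  obtain ⟨S', hcompl⟩ := Submodule.exists_isCompl S
  have hfin : Module.finrank K ↥S + Module.finrank K ↥S' = n := by
    rw [Submodule.finrank_add_eq_of_isCompl hcompl, Module.finrank_pi, Fintype.card_fin]
  set s := Module.finrank K ↥S with hs
  set s' := Module.finrank K ↥S' with hs'
  let b0 : Module.Basis (Fin s ⊕ Fin s') K (Fin n → K) :=
    ((Module.finBasis K ↥S).prod (Module.finBasis K ↥S')).map
      (Submodule.prodEquivOfIsCompl S S' hcompl)
  let e : (Fin s ⊕ Fin s') ≃ Fin n := finSumFinEquiv.trans (finCongr hfin)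
  let b : Module.Basis (Fin n) K (Fin n → K) := b0.reindex e
  have hbS : ∀ i : Fin s, b (e (Sum.inl i)) ∈ S := by
    intro i
    have : b (e (Sum.inl i)) = b0 (Sum.inl i) := by
      rw [Module.Basis.reindex_apply, Equiv.symm_apply_apply]
    rw [this]
    have : b0 (Sum.inl i) = (Submodule.prodEquivOfIsCompl S S' hcompl)
        ((Module.finBasis K ↥S).prod (Module.finBasis K ↥S') (Sum.inl i)) := Module.Basis.map_apply _ _ _
    rw [this, Module.Basis.prod_apply]
    simp only [Sum.elim_inl, Function.comp_apply, LinearMap.coe_inl]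
    have hco := Submodule.coe_prodEquivOfIsCompl S S' hcompl
    rw [show ((Submodule.prodEquivOfIsCompl S S' hcompl) ((Module.finBasis K ↥S) i, (0 : ↥S')))
        = (S.subtype.coprod S'.subtype) ((Module.finBasis K ↥S) i, (0 : ↥S')) by
      rw [← hco]; rfl]
    simp only [LinearMap.coprod_apply, Submodule.coe_subtype, map_zero, add_zero]
    exact ((Module.finBasis K ↥S) i).2
  let Q : Matrix (Fin n) (Fin n) K := (Pi.basisFun K (Fin n)).toMatrix ⇑b
  have hQ : ∀ i j, Q i j = b j i := by
    intro i j
    simp [Q, Module.Basis.toMatrix, Pi.basisFun_repr]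
  refine ⟨Q, Finset.image (fun i : Fin s => e (Sum.inl i)) Finset.univ, ?_, ?_, ?_⟩
  · have := (Pi.basisFun K (Fin n)).invertibleToMatrix b
    exact isUnit_of_invertible Q
  · rw [Finset.card_image_of_injective _ (fun a a' h => by
      have := e.injective h
      simpa using this)]
    simp [hs]
  · intro j hj
    obtain ⟨i, _, rfl⟩ := Finset.mem_image.mp hj
    have : (fun i' => Q i' (e (Sum.inl i))) = b (e (Sum.inl i)) := by
      funext i'; rw [hQ]
    rw [this]
    exact hbS i

lemma exists_unit_matrix_rows_in {n : ℕ} (S : Submodule K (Fin n → K)) :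
    ∃ (P : Matrix (Fin n) (Fin n) K) (I : Finset (Fin n)),
      IsUnit P ∧ I.card = Module.finrank K S ∧ ∀ i ∈ I, (fun j => P i j) ∈ S := by
  obtain ⟨Q, J, hQ, hJ, hcols⟩ := exists_unit_matrix_cols_in S
  refine ⟨Q.transpose, J, ?_, hJ, ?_⟩
  · rw [Matrix.isUnit_iff_isUnit_det, Matrix.det_transpose, ← Matrix.isUnit_iff_isUnit_det]
    exact hQ
  · intro i hi
    exact hcols i hi


lemma base_case {n m : ℕ} (hmn : m < n) (v w : Fin m → Fin n → R K d)
    (hterm : ∀ k, (∀ q, degle 0 (w k q)) ∨ (∀ p, degle 0 (v k p))) :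
    ∃ P Q : Matrix (Fin n) (Fin n) K, IsUnit P ∧ IsUnit Q ∧
      ∃ I J : Finset (Fin n), n < I.card + J.card ∧
        ∀ i ∈ I, ∀ j ∈ J,
          (P.map (algebraMap K (R K d)) *
            Matrix.of (fun p q => ∑ k, v k p * w k q) *
            Q.map (algebraMap K (R K d))) i j = 0 := by
  classical
  set Z : Finset (Fin m) := Finset.univ.filter (fun k => ∀ q, degle 0 (w k q)) with hZ
  set cw : Fin m → Fin n → K := fun k q => (w k q) 1 with hcw
  set cv : Fin m → Fin n → K := fun k p => (v k p) 1 with hcv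
  have hw : ∀ k ∈ Z, ∀ q, w k q = algebraMap K (R K d) (cw k q) := by
    intro k hk q
    exact const_of_degle_zero ((Finset.mem_filter.mp hk).2 q)
  have hv : ∀ k ∉ Z, ∀ p, v k p = algebraMap K (R K d) (cv k p) := by
    intro k hk p
    have : ¬ (∀ q, degle 0 (w k q)) := by
      intro hc; exact hk (Finset.mem_filter.mpr ⟨Finset.mem_univ _, hc⟩)
    exact const_of_degle_zero ((hterm k).resolve_left this p)
  set MW : Matrix {k // k ∈ Z} (Fin n) K := Matrix.of (fun z q => cw z.1 q) with hMW
  set MV : Matrix {k // k ∉ Z} (Fin n) K := Matrix.of (fun z p => cv z.1 p) with hMV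
  set SW := LinearMap.ker MW.mulVecLin with hSW
  set SV := LinearMap.ker MV.mulVecLin with hSV
  have hrankW : n ≤ Module.finrank K SW + Z.card := by
    have h1 : Module.finrank K (LinearMap.range MW.mulVecLin) + Module.finrank K SW
        = Module.finrank K (Fin n → K) := LinearMap.finrank_range_add_finrank_ker MW.mulVecLin
    have h2 : Module.finrank K (LinearMap.range MW.mulVecLin) ≤ Z.card := by
      have := Submodule.finrank_le (LinearMap.range MW.mulVecLin)
      rwa [Module.finrank_pi, Fintype.card_coe] at this
    have h3 : Module.finrank K (Fin n → K) = n := by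
      rw [Module.finrank_pi, Fintype.card_fin]
    omega
  have hrankV : n ≤ Module.finrank K SV + (m - Z.card) := by
    have h1 : Module.finrank K (LinearMap.range MV.mulVecLin) + Module.finrank K SV
        = Module.finrank K (Fin n → K) := LinearMap.finrank_range_add_finrank_ker MV.mulVecLin
    have h2 : Module.finrank K (LinearMap.range MV.mulVecLin) ≤ m - Z.card := by
      have hle := Submodule.finrank_le (LinearMap.range MV.mulVecLin)
      rw [Module.finrank_pi] at hle
      have hcard : Fintype.card {k // k ∉ Z} = m - Z.card := by
        have : Fintype.card {k // k ∉ Z} = (Finset.univ.filter (fun k => k ∉ Z)).card := by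
          rw [Fintype.card_subtype]
        rw [this, Finset.filter_not, Finset.card_sdiff_of_subset (Finset.filter_subset _ _)]
        congr 1
        · simp
        · congr 1
          apply Finset.filter_univ_mem
      omega
    have h3 : Module.finrank K (Fin n → K) = n := by
      rw [Module.finrank_pi, Fintype.card_fin]
    omega
  have hZm : Z.card ≤ m := by
    have := Finset.card_filter_le Finset.univ (fun k => ∀ q, degle 0 (w k q))
    simpa using this
  obtain ⟨Q, J, hQu, hJcard, hJmem⟩ := exists_unit_matrix_cols_in SW
  obtain ⟨P, I, hPu, hIcard, hImem⟩ := exists_unit_matrix_rows_in SV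
  refine ⟨P, Q, hPu, hQu, I, J, by omega, ?_⟩
  intro i hi j hj
  -- expand the entry
  have expand : (P.map (algebraMap K (R K d)) *
      Matrix.of (fun p q => ∑ k, v k p * w k q) *
      Q.map (algebraMap K (R K d))) i j
      = ∑ k, (∑ p, algebraMap K (R K d) (P i p) * v k p)
          * (∑ q, w k q * algebraMap K (R K d) (Q q j)) := by
    rw [Matrix.mul_apply]
    have e1 : ∀ q, (P.map (algebraMap K (R K d)) * Matrix.of (fun p q => ∑ k, v k p * w k q)) i q
        = ∑ p, ∑ k, algebraMap K (R K d) (P i p) * v k p * w k q := by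
      intro q
      rw [Matrix.mul_apply]
      apply Finset.sum_congr rfl
      intro p _
      rw [Matrix.map_apply, Matrix.of_apply, Finset.mul_sum]
      apply Finset.sum_congr rfl
      intro k _
      rw [mul_assoc]
    calc ∑ q, (P.map (algebraMap K (R K d)) * Matrix.of (fun p q => ∑ k, v k p * w k q)) i q
          * (Q.map (algebraMap K (R K d))) q j
        = ∑ q, ∑ p, ∑ k, algebraMap K (R K d) (P i p) * v k p * w k q
            * algebraMap K (R K d) (Q q j) := by
          apply Finset.sum_congr rfl
          intro q _
          rw [e1 q, Finset.sum_mul]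
          apply Finset.sum_congr rfl
          intro p _
          rw [Finset.sum_mul]
          rfl
      _ = ∑ k, ∑ p, ∑ q, algebraMap K (R K d) (P i p) * v k p * w k q
            * algebraMap K (R K d) (Q q j) := by
          rw [show (∑ q : Fin n, ∑ p : Fin n, ∑ k : Fin m, algebraMap K (R K d) (P i p) * v k p * w k q
            * algebraMap K (R K d) (Q q j))
            = ∑ q : Fin n, ∑ k : Fin m, ∑ p : Fin n, algebraMap K (R K d) (P i p) * v k p * w k q
            * algebraMap K (R K d) (Q q j) from
            Finset.sum_congr rfl (fun q _ => Finset.sum_comm)]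
          rw [Finset.sum_comm]
          exact Finset.sum_congr rfl (fun k _ => Finset.sum_comm)
      _ = ∑ k, (∑ p, algebraMap K (R K d) (P i p) * v k p)
          * (∑ q, w k q * algebraMap K (R K d) (Q q j)) := by
          apply Finset.sum_congr rfl
          intro k _
          rw [Finset.sum_mul_sum]
          simp only [mul_assoc]
  rw [expand]
  apply Finset.sum_eq_zero
  intro k _
  by_cases hk : k ∈ Z
  · have : (∑ q, w k q * algebraMap K (R K d) (Q q j)) = 0 := by
      have : ∀ q, w k q * algebraMap K (R K d) (Q q j)
          = algebraMap K (R K d) (cw k q * Q q j) := by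
        intro q
        rw [hw k hk q, ← _root_.map_mul]
      rw [Finset.sum_congr rfl (fun q _ => this q), ← map_sum]
      have hker : (fun q => Q q j) ∈ SW := hJmem j hj
      have : MW.mulVec (fun q => Q q j) = 0 := LinearMap.mem_ker.mp hker
      have hz := congrFun this ⟨k, hk⟩
      rw [Matrix.mulVec, dotProduct] at hz
      have : ∑ q, cw k q * Q q j = 0 := by
        simpa [hMW] using hz
      rw [this, map_zero]
    rw [this, mul_zero]
  · have : (∑ p, algebraMap K (R K d) (P i p) * v k p) = 0 := by
      have : ∀ p, algebraMap K (R K d) (P i p) * v k p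
          = algebraMap K (R K d) (P i p * cv k p) := by
        intro p
        rw [hv k hk p, ← _root_.map_mul]
      rw [Finset.sum_congr rfl (fun p _ => this p), ← map_sum]
      have hker : (fun p => P i p) ∈ SV := hImem i hi
      have : MV.mulVec (fun p => P i p) = 0 := LinearMap.mem_ker.mp hker
      have hz := congrFun this ⟨k, hk⟩
      rw [Matrix.mulVec, dotProduct] at hz
      have : ∑ p, cv k p * P i p = 0 := by
        simpa [hMV] using hz
      have : ∑ p, P i p * cv k p = 0 := by
        rw [← this]
        apply Finset.sum_congr rfl
        intro p _
        rw [mul_comm]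
      rw [this, map_zero]
    rw [this, zero_mul]

end NFH

open NFH in
/-- A linear square matrix over the free associative algebra `K⟨x₁,…,x_d⟩` which is
not full is associated over `K` to a (linear) hollow matrix: there are invertible
matrices `P, Q` over `K` such that `P A Q` has a `k × l` zero submatrix with
`k + l > n`. -/
theorem nonfull_linear_associated_to_hollow {K : Type*} [Field K] {d n : ℕ}
    (A₀ : Matrix (Fin n) (Fin n) K) (Ac : Fin d → Matrix (Fin n) (Fin n) K)
    (A : Matrix (Fin n) (Fin n) (FreeAlgebra K (Fin d)))
    (hA : A = Matrix.of fun p q =>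
      algebraMap K (FreeAlgebra K (Fin d)) (A₀ p q)
        + ∑ i : Fin d, algebraMap K (FreeAlgebra K (Fin d)) (Ac i p q) * FreeAlgebra.ι K i)
    (hnotfull : ∃ (m : ℕ) (T : Matrix (Fin n) (Fin m) (FreeAlgebra K (Fin d)))
      (U : Matrix (Fin m) (Fin n) (FreeAlgebra K (Fin d))), m < n ∧ A = T * U) :
    ∃ P Q : Matrix (Fin n) (Fin n) K, IsUnit P ∧ IsUnit Q ∧
      ∃ I J : Finset (Fin n), n < I.card + J.card ∧
        ∀ i ∈ I, ∀ j ∈ J,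
          (P.map (algebraMap K (FreeAlgebra K (Fin d))) * A *
            Q.map (algebraMap K (FreeAlgebra K (Fin d)))) i j = 0 := by
  classical
  obtain ⟨m, T, U, hmn, hTU⟩ := hnotfull
  set e := FreeAlgebra.equivMonoidAlgebraFreeMonoid (R := K) (X := Fin d) with he
  set v : Fin m → Fin n → NFH.R K d := fun k p => e (T p k) with hv
  set w : Fin m → Fin n → NFH.R K d := fun k q => e (U k q) with hw
  have hsum : ∀ p q, (∑ k, v k p * w k q) = e (A p q) := by
    intro p q
    rw [hTU, Matrix.mul_apply, map_sum]
    apply Finset.sum_congr rfl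
    intro k _
    rw [_root_.map_mul]
  have hlin : ∀ p q, e (A p q) = algebraMap K (NFH.R K d) (A₀ p q)
      + ∑ i, MonoidAlgebra.single (FreeMonoid.of i) (Ac i p q) := by
    intro p q
    rw [hA]
    simp only [Matrix.of_apply]
    rw [map_add, map_sum, AlgEquiv.commutes]
    congr 1
    apply Finset.sum_congr rfl
    intro i _
    rw [_root_.map_mul, AlgEquiv.commutes]
    have hι : e (FreeAlgebra.ι K i) = MonoidAlgebra.single (FreeMonoid.of i) (1:K) := by
      simp [he, FreeAlgebra.equivMonoidAlgebraFreeMonoid]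
    rw [hι, NFH.algebraMap_eq_single, MonoidAlgebra.single_mul_single, one_mul, mul_one]
  have hdeg : ∀ p q, NFH.degle 1 (∑ k, v k p * w k q) := by
    intro p q
    rw [hsum p q, hlin p q]
    intro x hx
    rcases Finset.mem_union.mp (Finsupp.support_add hx) with h | h
    · have := Finsupp.support_single_subset h
      simp only [Finset.mem_singleton] at this
      subst this
      simp
    · have hsub := Finsupp.support_finset_sum (s := (Finset.univ : Finset (Fin d)))
        (f := fun i => (MonoidAlgebra.single (M := FM d) (FreeMonoid.of i) (Ac i p q)).coeff) (by rw [← MonoidAlgebra.coeff_sum]; exact h)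
      obtain ⟨i, -, hxi⟩ := Finset.mem_biUnion.mp hsub
      have := Finsupp.support_single_subset hxi
      simp only [Finset.mem_singleton] at this
      subst this
      simp [FreeMonoid.length_of]
  obtain ⟨v2, w2, hs, hterm⟩ := NFH.reduce (NFH.meas v w) v w le_rfl hdeg
  obtain ⟨P, Q, hPu, hQu, I, J, hIJ, hzero⟩ := NFH.base_case hmn v2 w2 hterm
  refine ⟨P, Q, hPu, hQu, I, J, hIJ, ?_⟩
  intro i hi j hj
  have hA2 : Matrix.of (fun p q => ∑ k, v2 k p * w2 k q) = A.map ⇑e := by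
    ext p q
    simp only [Matrix.of_apply, Matrix.map_apply]
    rw [hs p q, hsum p q]
  have hz := hzero i hi j hj
  rw [hA2] at hz
  apply e.injective
  rw [map_zero]
  have hmaps : (P.map (algebraMap K (FreeAlgebra K (Fin d))) * A *
      Q.map (algebraMap K (FreeAlgebra K (Fin d)))).map ⇑e
      = P.map ⇑(algebraMap K (NFH.R K d)) * A.map ⇑e * Q.map ⇑(algebraMap K (NFH.R K d)) := by
    have hring : ∀ (M N : Matrix (Fin n) (Fin n) (FreeAlgebra K (Fin d))),
        (M * N).map ⇑e = M.map ⇑e * N.map ⇑e := by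
      intro M N
      exact Matrix.map_mul (f := (e : FreeAlgebra K (Fin d) →+* NFH.R K d))
    have hcomp : (⇑e ∘ ⇑(algebraMap K (FreeAlgebra K (Fin d)))) = ⇑(algebraMap K (NFH.R K d)) := by
      funext c
      exact AlgEquiv.commutes e c
    rw [hring, hring, Matrix.map_map, Matrix.map_map, hcomp]
  calc e ((P.map (algebraMap K (FreeAlgebra K (Fin d))) * A *
        Q.map (algebraMap K (FreeAlgebra K (Fin d)))) i j)
      = ((P.map (algebraMap K (FreeAlgebra K (Fin d))) * A *
        Q.map (algebraMap K (FreeAlgebra K (Fin d)))).map ⇑e) i j := rfl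
    _ = (P.map ⇑(algebraMap K (NFH.R K d)) * A.map ⇑e * Q.map ⇑(algebraMap K (NFH.R K d))) i j := by
        rw [hmaps]
    _ = 0 := hz
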